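/- In generalized Klondike with m suits each of n ranks, starting from an initial configuration (all cards face-down in the build stacks and all suit stacks empty), every winning sequence of moves contains exactly mn moves of type 1 (turning a card face-up), exactly mn moves of type 3 (moving a card to a suit stack), and at most mn moves of type 2 (moving a whole card block onto another card block); in particular, every winning sequence has length at most 3mn. -/

import Mathlib

/-! Generalized Klondike (without pile stack and talon), played with `m` suits,
each colored red or black and containing cards of ranks `0, …, n-1`
(rank `0` is the Ace, rank `n-1` the King). -/

namespace Klondike

/-- A card: a suit together with a rank (`0`-based, so rank `0` is the Ace). -/
abbrev Card (m n : ℕ) := Fin m × Fin n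

/-- A Klondike configuration: `m` suit stacks and `b` build stacks.  The head of
each list is the top of the stack; the `Bool` records whether a card in a build
stack is face-up (`true`) or face-down (`false`). -/
structure Config (m n b : ℕ) where
  suit : Fin m → List (Card m n)
  build : Fin b → List (Card m n × Bool)

variable {m n b : ℕ}

/-- A suit stack accepts a card: an empty suit stack accepts exactly the Aces, and
a nonempty one with top card `t` accepts `c` iff `c` has the same suit as `t` and
rank one higher. -/
def suitAccepts : List (Card m n) → Card m n → Prop
  | [], c => c.2.val = 0
  | t :: _, c => c.1 = t.1 ∧ c.2.val = t.2.val + 1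

/-- The card block of a build stack: its face-up topmost cards. -/
def cardBlock (l : List (Card m n × Bool)) : List (Card m n × Bool) :=
  l.takeWhile fun x => x.2

/-- The build stack `l` (via its nonempty card block, with top card `t`) accepts a
card `c` iff the suits of `c` and `t` have different colors and the rank of `c` is
one lower than the rank of `t`. -/
def blockAccepts (color : Fin m → Bool) : List (Card m n × Bool) → Card m n → Prop
  | (t, true) :: _, c => color c.1 ≠ color t.1 ∧ c.2.val + 1 = t.2.val
  | _, _ => False

/-- The three types of moves. -/
inductive MoveType
  | turn    -- type 1: turn the top card of an all-face-down build stack face-up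
  | block   -- type 2: move a whole card block onto another card block
  | toSuit  -- type 3: move the top card of a card block onto a suit stack
  deriving DecidableEq

/-- One move transforming configuration `c` into `c'`. -/
def Step (color : Fin m → Bool) (c c' : Config m n b) : MoveType → Prop
  | .turn => ∃ (i : Fin b) (x : Card m n) (rest : List (Card m n × Bool)),
      c.build i = (x, false) :: rest ∧
      (∀ y ∈ c.build i, y.2 = false) ∧
      c'.suit = c.suit ∧
      c'.build = Function.update c.build i ((x, true) :: rest)
  | .block => ∃ i j : Fin b, i ≠ j ∧
      cardBlock (c.build i) ≠ [] ∧
      (∃ bottom, (cardBlock (c.build i)).getLast? = some bottom ∧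
        blockAccepts color (c.build j) bottom.1) ∧
      c'.suit = c.suit ∧
      c'.build =
        Function.update (Function.update c.build i ((c.build i).dropWhile fun x => x.2))
          j (cardBlock (c.build i) ++ c.build j)
  | .toSuit => ∃ (i : Fin b) (s : Fin m) (x : Card m n)
        (rest : List (Card m n × Bool)),
      c.build i = (x, true) :: rest ∧
      suitAccepts (c.suit s) x ∧
      c'.build = Function.update c.build i rest ∧
      c'.suit = Function.update c.suit s (x :: c.suit s)

/-- A play: a sequence of moves, each recorded with its type and the configuration
it produces. -/
def Play (color : Fin m → Bool) : Config m n b → List (MoveType × Config m n b) → Prop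
  | _, [] => True
  | c, (t, c') :: rest => Step color c c' t ∧ Play color c' rest

/-- The configuration reached at the end of a play starting at `c`. -/
def finalConfig (c : Config m n b) (l : List (MoveType × Config m n b)) : Config m n b :=
  (l.map Prod.snd).getLastD c

/-- The player has won: all cards have been moved to the suit stacks. -/
def AllOnSuits (c : Config m n b) : Prop := ∀ i, c.build i = []

/-- An initial configuration: the suit stacks are empty, all cards lie face-down
in the build stacks, and every card occurs exactly once. -/
def Initial (c : Config m n b) : Prop :=
  (∀ s, c.suit s = []) ∧
  (∀ i, ∀ y ∈ c.build i, y.2 = false) ∧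
  (∀ x : Card m n, (∑ i, ((c.build i).map Prod.fst).count x) = 1)

end Klondike


namespace Klondike

variable {m n b : ℕ}

/-- 1 if the list is empty or its head is face-down. -/
def under {α : Type*} : List (α × Bool) → ℕ
  | (_, true) :: _ => 0
  | _ => 1

@[simp] lemma under_nil {α : Type*} : under ([] : List (α × Bool)) = 1 := rfl
@[simp] lemma under_cons {α : Type*} (x : α × Bool) (l : List (α × Bool)) :
    under (x :: l) = if x.2 then 0 else 1 := by
  obtain ⟨a, c⟩ := x; cases c <;> rfl

/-- number of cards not sitting directly on a face-up card -/
def phi {α : Type*} : List (α × Bool) → ℕ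
  | [] => 0
  | _ :: rest => under rest + phi rest

@[simp] lemma phi_nil {α : Type*} : phi ([] : List (α × Bool)) = 0 := rfl
@[simp] lemma phi_cons {α : Type*} (x : α × Bool) (l : List (α × Bool)) :
    phi (x :: l) = under l + phi l := rfl

lemma phi_append {α : Type*} (A B : List (α × Bool)) (hA : A ≠ [])
    (hup : ∀ a ∈ A, a.2 = true) :
    phi (A ++ B) = under B + phi B := by
  induction A with
  | nil => simp at hA
  | cons a A ih =>
    cases A with
    | nil => simp
    | cons a' A' =>
      have h' : a'.2 = true := hup a' (by simp)
      have ih' := ih (by simp) (fun x hx => hup x (by simp [hx]))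
      simp only [List.cons_append] at ih' ⊢
      rw [phi_cons, ih', under_cons, h']
      simp

lemma under_dropWhile {α : Type*} (l : List (α × Bool)) :
    under (l.dropWhile fun x => x.2) = 1 := by
  induction l with
  | nil => rfl
  | cons x xs ih =>
    rw [List.dropWhile_cons]
    by_cases h : x.2 = true <;> simp [h, ih]

lemma phi_all_down {α : Type*} (l : List (α × Bool)) (h : ∀ y ∈ l, y.2 = false) :
    phi l = l.length := by
  induction l with
  | nil => rfl
  | cons x xs ih =>
    have := h x (by simp)
    cases xs with
    | nil => simp [this]
    | cons y ys =>
      have hy : y.2 = false := h y (by simp)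
      rw [phi_cons, ih (fun z hz => h z (by simp [hz]))]
      simp [hy]
      omega

/-- Measures on configurations -/
def Fdown (c : Config m n b) : ℕ := ∑ i, ((c.build i).countP fun x => !x.2)
def Fup (c : Config m n b) : ℕ := ∑ i, ((c.build i).countP fun x => x.2)
def Phi (c : Config m n b) : ℕ := ∑ i, phi (c.build i)

lemma sum_update (f : Fin b → List (Card m n × Bool)) (i : Fin b)
    (v : List (Card m n × Bool)) (g : List (Card m n × Bool) → ℕ) :
    (∑ j, g (Function.update f i v j)) + g (f i) = (∑ j, g (f j)) + g v := by
  classical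
  have h1 : (fun j => g (Function.update f i v j))
      = Function.update (fun j => g (f j)) i (g v) := by
    funext j
    by_cases h : j = i <;> simp [Function.update_apply, h]
  rw [h1, Finset.sum_update_of_mem (Finset.mem_univ i),
    ← Finset.add_sum_erase _ (fun j => g (f j)) (Finset.mem_univ i)]
  simp only [Finset.erase_eq]
  omega

lemma blockAccepts_shape {color : Fin m → Bool} {l : List (Card m n × Bool)}
    {c : Card m n} (h : blockAccepts color l c) :
    ∃ t rest, l = (t, true) :: rest := by
  cases l with
  | nil => exact h.elim
  | cons x rest =>
    obtain ⟨t, bo⟩ := x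
    cases bo with
    | false => exact h.elim
    | true => exact ⟨t, rest, rfl⟩

lemma step_turn {color : Fin m → Bool} {c c' : Config m n b}
    (h : Step color c c' .turn) :
    Fdown c' + 1 = Fdown c ∧ Fup c' = Fup c + 1 ∧ Phi c' = Phi c := by
  obtain ⟨i, x, rest, hb, _, _, hb'⟩ := h
  have hd := sum_update c.build i ((x, true) :: rest) (·.countP fun x => !x.2)
  have hu := sum_update c.build i ((x, true) :: rest) (·.countP fun x => x.2)
  have hp := sum_update c.build i ((x, true) :: rest) phi
  rw [hb] at hd hu hp
  simp [List.countP_cons] at hd hu hp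
  simp only [Fdown, Fup, Phi, hb']
  refine ⟨by omega, by omega, by omega⟩

lemma step_block {color : Fin m → Bool} {c c' : Config m n b}
    (h : Step color c c' .block) :
    Fdown c' = Fdown c ∧ Fup c' = Fup c ∧ Phi c' + 1 = Phi c := by
  classical
  obtain ⟨i, j, hij, hne, ⟨bot, _, hacc⟩, _, hb'⟩ := h
  set A := cardBlock (c.build i) with hAdef
  set B := (c.build i).dropWhile (fun x => x.2) with hBdef
  have hsplit : A ++ B = c.build i := by
    rw [hAdef, hBdef]
    simp only [cardBlock]
    exact List.takeWhile_append_dropWhile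
  have hAup : ∀ a ∈ A, a.2 = true := fun a ha => List.mem_takeWhile_imp ha
  obtain ⟨t, r, hj⟩ := blockAccepts_shape hacc
  -- per-stack values
  have key : ∀ g : List (Card m n × Bool) → ℕ,
      (∑ k, g (c'.build k)) + g (c.build i) + g (c.build j)
        = (∑ k, g (c.build k)) + g B + g (A ++ c.build j) := by
    intro g
    set f1 := Function.update c.build i B with hf1
    have e1 : f1 i = B := by simp [hf1]
    have e2 : f1 j = c.build j := by simp [hf1, Function.update_apply, hij.symm]
    have s1 := sum_update c.build i B g
    rw [← hf1] at s1
    have s2 := sum_update f1 j (A ++ c.build j) g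
    rw [e2] at s2
    have : c'.build = Function.update f1 j (A ++ c.build j) := hb'
    rw [this]
    omega
  have hphi_i : phi (c.build i) = phi B + 1 := by
    rw [← hsplit, phi_append A B hne hAup, under_dropWhile]
    omega
  have hphi_j : phi (A ++ c.build j) = phi (c.build j) := by
    rw [phi_append A _ hne hAup, hj]
    simp
  have hcount : ∀ p : Card m n × Bool → Bool,
      (B.countP p) + ((A ++ c.build j).countP p)
        = ((c.build i).countP p) + ((c.build j).countP p) := by
    intro p
    rw [← hsplit, List.countP_append, List.countP_append]
    omega
  have kd := key (·.countP fun x => !x.2)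
  have ku := key (·.countP fun x => x.2)
  have kp := key phi
  have cd := hcount (fun x => !x.2)
  have cu := hcount (fun x => x.2)
  simp only [Fdown, Fup, Phi]
  omega

lemma step_toSuit {color : Fin m → Bool} {c c' : Config m n b}
    (h : Step color c c' .toSuit) :
    Fdown c' = Fdown c ∧ Fup c' + 1 = Fup c ∧ Phi c' ≤ Phi c := by
  obtain ⟨i, s, x, rest, hb, _, hb', _⟩ := h
  have hd := sum_update c.build i rest (·.countP fun x => !x.2)
  have hu := sum_update c.build i rest (·.countP fun x => x.2)
  have hp := sum_update c.build i rest phi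
  rw [hb] at hd hu hp
  simp [List.countP_cons] at hd hu hp
  simp only [Fdown, Fup, Phi, hb']
  refine ⟨by omega, by omega, by omega⟩

@[simp] lemma finalConfig_nil (c : Config m n b) : finalConfig c [] = c := rfl

lemma finalConfig_cons (c : Config m n b) (t : MoveType) (c' : Config m n b)
    (l : List (MoveType × Config m n b)) :
    finalConfig c ((t, c') :: l) = finalConfig c' l := by
  simp only [finalConfig, List.map_cons, List.getLastD_cons]

lemma play_measures (color : Fin m → Bool)
    (l : List (MoveType × Config m n b)) :
    ∀ c : Config m n b, Play color c l →
    Fdown c = Fdown (finalConfig c l) + (l.map Prod.fst).count MoveType.turn ∧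
    Fup c + (l.map Prod.fst).count MoveType.turn
      = Fup (finalConfig c l) + (l.map Prod.fst).count MoveType.toSuit ∧
    Phi (finalConfig c l) + (l.map Prod.fst).count MoveType.block ≤ Phi c := by
  induction l with
  | nil => intro c _; simp
  | cons p rest ih =>
    intro c hplay
    obtain ⟨t, c'⟩ := p
    obtain ⟨hstep, hrest⟩ := hplay
    have IH := ih c' hrest
    rw [finalConfig_cons]
    simp only [List.map_cons, List.count_cons]
    cases t with
    | turn =>
      have := step_turn hstep
      simp
      omega
    | block =>
      have := step_block hstep
      simp
      omega
    | toSuit =>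
      have := step_toSuit hstep
      simp
      omega

lemma sum_count_eq_length (l : List (Card m n)) :
    ∑ x : Card m n, l.count x = l.length := by
  induction l with
  | nil => simp
  | cons a l ih =>
    simp only [List.count_cons, List.length_cons, Finset.sum_add_distrib, ih]
    simp

lemma length_eq_counts (l : List MoveType) :
    l.length = l.count .turn + l.count .block + l.count .toSuit := by
  induction l with
  | nil => simp
  | cons t rest ih =>
    cases t <;> simp [List.count_cons, ih] <;> omega

lemma initial_measures (c : Config m n b) (h : Initial c) :
    Fdown c = m * n ∧ Fup c = 0 ∧ Phi c = m * n := by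
  obtain ⟨_, hdown, hcount⟩ := h
  have hlen : (∑ i, ((c.build i)).length) = m * n := by
    have : ∑ x : Card m n, ∑ i, ((c.build i).map Prod.fst).count x
        = ∑ x : Card m n, 1 := by
      exact Finset.sum_congr rfl (fun x _ => hcount x)
    rw [Finset.sum_comm] at this
    simp only [sum_count_eq_length, List.length_map] at this
    simpa [Fintype.card_prod] using this
  refine ⟨?_, ?_, ?_⟩
  · rw [← hlen, Fdown]
    refine Finset.sum_congr rfl (fun i _ => ?_)
    rw [List.countP_eq_length]
    intro y hy
    simp [hdown i y hy]
  · rw [Fup]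
    refine Finset.sum_eq_zero (fun i _ => ?_)
    rw [List.countP_eq_zero]
    intro y hy
    simp [hdown i y hy]
  · rw [← hlen, Phi]
    exact Finset.sum_congr rfl (fun i _ => phi_all_down _ (hdown i))

lemma won_measures (c : Config m n b) (h : AllOnSuits c) :
    Fdown c = 0 ∧ Fup c = 0 ∧ Phi c = 0 := by
  unfold Fdown Fup Phi
  refine ⟨?_, ?_, ?_⟩ <;> exact Finset.sum_eq_zero fun i _ => by simp [h i]

end Klondike

open Klondike in
/-- Starting from an initial configuration of generalized Klondike with `m` suits
of `n` ranks, every winning sequence of moves contains exactly `m*n` moves of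
type 1 (turning a card face-up), exactly `m*n` moves of type 3 (moving a card to a
suit stack) and at most `m*n` moves of type 2 (moving a whole card block onto
another card block); in particular it has length at most `3*m*n`. -/
theorem klondike_winning_sequence_counts
    (m n b : ℕ) (color : Fin m → Bool) (c₀ : Config m n b)
    (hinit : Initial c₀)
    (l : List (MoveType × Config m n b))
    (hplay : Play color c₀ l)
    (hwin : AllOnSuits (finalConfig c₀ l)) :
    (l.map Prod.fst).count MoveType.turn = m * n ∧
    (l.map Prod.fst).count MoveType.toSuit = m * n ∧
    (l.map Prod.fst).count MoveType.block ≤ m * n ∧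
    l.length ≤ 3 * (m * n) := by
  obtain ⟨hd0, hu0, hp0⟩ := initial_measures c₀ hinit
  obtain ⟨hdf, huf, hpf⟩ := won_measures _ hwin
  obtain ⟨h1, h2, h3⟩ := play_measures color l c₀ hplay
  have hlen := length_eq_counts (l.map Prod.fst)
  have hll : (l.map Prod.fst).length = l.length := List.length_map _
  refine ⟨by omega, by omega, by omega, by omega⟩
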